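/- If a random vector (X₁,...,Xₙ) is stochastically increasing in a random variable Y (i.e., for every bounded coordinatewise-nondecreasing g, y ↦ E[g(X)|Y=y] is nondecreasing), and f₁,...,f_M : ℝⁿ → ℝ are coordinatewise nondecreasing with Y_j = f_j(X₁,...,Xₙ) for each j, and Y = Y_{j₀} for some index j₀, then (Y₁,...,Y_M) is PRDS on {j₀}: for every nondecreasing set D ⊆ ℝ^M, t ↦ P((Y₁,...,Y_M) ∈ D | Y_{j₀} = t) is nondecreasing. -/

import Mathlib

open MeasureTheory ProbabilityTheory
open scoped ENNReal

theorem stmt12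
    {Ω : Type*} [MeasurableSpace Ω] (μ : Measure Ω) [IsProbabilityMeasure μ]
    (n M : ℕ) (X : Ω → (Fin n → ℝ)) (hX : Measurable X)
    (f : Fin M → (Fin n → ℝ) → ℝ)
    (hfm : ∀ j, Measurable (f j)) (hfmono : ∀ j, Monotone (f j))
    (j₀ : Fin M)
    (κ : Kernel ℝ (Fin n → ℝ)) [IsMarkovKernel κ]
    (hκ : μ.map (fun ω => (f j₀ (X ω), X ω)) = (μ.map (fun ω => f j₀ (X ω))) ⊗ₘ κ)
    (hκmono : ∀ g : (Fin n → ℝ) → ℝ, Measurable g → Monotone g → (∃ C, ∀ x, |g x| ≤ C) →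
      Monotone (fun y => ∫ x, g x ∂(κ y))) :
    ∃ η : Kernel ℝ (Fin M → ℝ), IsMarkovKernel η ∧
      μ.map (fun ω => (f j₀ (X ω), fun j => f j (X ω))) =
        (μ.map (fun ω => f j₀ (X ω))) ⊗ₘ η ∧
      ∀ D : Set (Fin M → ℝ), MeasurableSet D → IsUpperSet D →
        Monotone (fun t => η t D) := by
  set F : (Fin n → ℝ) → (Fin M → ℝ) := fun x j => f j x with hF
  have hFmeas : Measurable F := measurable_pi_lambda _ fun j => hfm j
  have hFmono : Monotone F := fun x y hxy j => hfmono j hxy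
  refine ⟨κ.map F, Kernel.IsMarkovKernel.map κ hFmeas, ?_, ?_⟩
  · -- map equality
    have h1 : μ.map (fun ω => (f j₀ (X ω), fun j => f j (X ω))) =
        (μ.map (fun ω => (f j₀ (X ω), X ω))).map (Prod.map id F) :=
      (Measure.map_map (measurable_id.prodMap hFmeas)
        (((hfm j₀).comp hX).prodMk hX)).symm
    rw [h1, hκ]
    have hν : SFinite (μ.map (fun ω => f j₀ (X ω))) := by
      have : IsProbabilityMeasure (μ.map (fun ω => f j₀ (X ω))) :=
        Measure.isProbabilityMeasure_map ((hfm j₀).comp hX).aemeasurable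
      infer_instance
    ext s hs
    rw [Measure.map_apply (measurable_id.prodMap hFmeas) hs,
      Measure.compProd_apply ((measurable_id.prodMap hFmeas) hs),
      Measure.compProd_apply hs]
    refine lintegral_congr fun a => ?_
    rw [Kernel.map_apply' _ hFmeas _ (measurable_prodMk_left hs)]
    congr 1
  · intro D hD hDupper
    intro t t' htt'
    simp only [Kernel.map_apply' _ hFmeas _ hD]
    have hS : MeasurableSet (F ⁻¹' D) := hFmeas hD
    have hSupper : IsUpperSet (F ⁻¹' D) := fun x y hxy hx => hDupper (hFmono hxy) hx
    have hmono := hκmono (Set.indicator (F ⁻¹' D) (fun _ => (1:ℝ)))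
      (measurable_const.indicator hS)
      (fun x y hxy => by
        by_cases hx : x ∈ F ⁻¹' D
        · simp [hx, hSupper hxy hx]
        · simp [hx]
          exact Set.indicator_nonneg (fun _ _ => zero_le_one) _)
      ⟨1, fun x => by
        by_cases hx : x ∈ F ⁻¹' D <;> simp [hx]⟩ htt'
    have hint : ∀ s, ∫ x, Set.indicator (F ⁻¹' D) (fun _ => (1:ℝ)) x ∂(κ s)
        = (κ s (F ⁻¹' D)).toReal := by
      intro s
      rw [integral_indicator_const _ hS]
      simp
      rfl
    simp only [hint] at hmono
    exact (ENNReal.toReal_le_toReal (measure_ne_top _ _) (measure_ne_top _ _)).mp hmono
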